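/- Let α ∈ ℝ and β ≥ 0. For ξ ∈ ℤ₊ⁿ put U(ξ) := (αE + βA)ξ, Q(ξ) := ½⟨(αE + βA)ξ, ξ⟩, and q_ξ := Σ_{i=1}^n (e^{U_i(ξ)} + 1_{ξᵢ > 0}). Then for every nonzero ξ ∈ ℤ₊ⁿ, Σ_{i=1}^n [ e^{U_i(ξ)} (Q(ξ + eᵢ) − Q(ξ)) + 1_{ξᵢ > 0} (Q(ξ − eᵢ) − Q(ξ)) ] ≥ q_ξ · ( Ψ(U(ξ))/Φ(U(ξ)) + α/2 ), where Φ(u) := Σᵢ (e^{uᵢ} + 1) and Ψ(u) := Σᵢ uᵢ(e^{uᵢ} − 1). -/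

import Mathlib

open Finset Real Matrix

/-- `U(ξ) = (αE + βA)ξ`, the gradient of `Q`. -/
noncomputable def U {n : ℕ} (G : SimpleGraph (Fin n)) [DecidableRel G.Adj]
    (α β : ℝ) (ξ : Fin n → ℕ) : Fin n → ℝ :=
  (α • (1 : Matrix (Fin n) (Fin n) ℝ) + β • G.adjMatrix ℝ).mulVec fun j => (ξ j : ℝ)

/-- `Q(ξ) = ½⟨(αE + βA)ξ, ξ⟩`. -/
noncomputable def Q {n : ℕ} (G : SimpleGraph (Fin n)) [DecidableRel G.Adj]
    (α β : ℝ) (ξ : Fin n → ℕ) : ℝ :=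
  1 / 2 * ((α • (1 : Matrix (Fin n) (Fin n) ℝ) + β • G.adjMatrix ℝ).mulVec
      (fun j => (ξ j : ℝ)) ⬝ᵥ fun j => (ξ j : ℝ))

section Aux

variable {n : ℕ} (G : SimpleGraph (Fin n)) [DecidableRel G.Adj] (α β : ℝ)

private lemma Mat_symm (i j : Fin n) :
    (α • (1 : Matrix (Fin n) (Fin n) ℝ) + β • G.adjMatrix ℝ) i j
      = (α • (1 : Matrix (Fin n) (Fin n) ℝ) + β • G.adjMatrix ℝ) j i := by
  simp [Matrix.add_apply, Matrix.smul_apply, Matrix.one_apply, SimpleGraph.adjMatrix_apply,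
    eq_comm, G.adj_comm i j]

private lemma Q_step (x : Fin n → ℝ) (i : Fin n) (c : ℝ) :
    1 / 2 * ((α • (1 : Matrix (Fin n) (Fin n) ℝ) + β • G.adjMatrix ℝ).mulVec
        (x + Pi.single i c) ⬝ᵥ (x + Pi.single i c))
      - 1 / 2 * ((α • (1 : Matrix (Fin n) (Fin n) ℝ) + β • G.adjMatrix ℝ).mulVec x ⬝ᵥ x)
      = c * ((α • (1 : Matrix (Fin n) (Fin n) ℝ) + β • G.adjMatrix ℝ).mulVec x i)
        + c ^ 2 * α / 2 := by
  set M := α • (1 : Matrix (Fin n) (Fin n) ℝ) + β • G.adjMatrix ℝ with hM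
  have h1 : M.mulVec (x + Pi.single i c) = M.mulVec x + M.mulVec (Pi.single i c) :=
    Matrix.mulVec_add M x _
  rw [h1, add_dotProduct, dotProduct_add, dotProduct_add]
  have h2 : M.mulVec x ⬝ᵥ Pi.single i c = M.mulVec x i * c := dotProduct_single _ _ _
  have h3 : M.mulVec (Pi.single i c) ⬝ᵥ x = c * M.mulVec x i := by
    rw [Matrix.mulVec_single]
    unfold dotProduct Matrix.mulVec dotProduct
    rw [Finset.mul_sum]
    refine Finset.sum_congr rfl fun j _ => ?_
    show M j i * c * x j = c * (M i j * x j)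
    rw [hM, Mat_symm G α β j i]; ring
  have h4 : M.mulVec (Pi.single i c) ⬝ᵥ Pi.single i c = c ^ 2 * α := by
    rw [Matrix.mulVec_single, dotProduct_single]
    have : M i i = α := by
      simp [hM, Matrix.add_apply, Matrix.smul_apply, Matrix.one_apply]
    show M i i * c * c = c ^ 2 * α
    rw [this]; ring
  rw [h2, h3, h4]; ring

private lemma cast_update_add (ξ : Fin n → ℕ) (i : Fin n) :
    (fun j => ((Function.update ξ i (ξ i + 1)) j : ℝ))
      = (fun j => (ξ j : ℝ)) + Pi.single i 1 := by
  funext j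
  by_cases h : j = i
  · subst h; simp
  · simp [Function.update_of_ne h, Pi.single_eq_of_ne h]

private lemma cast_update_sub (ξ : Fin n → ℕ) (i : Fin n) (h : 0 < ξ i) :
    (fun j => ((Function.update ξ i (ξ i - 1)) j : ℝ))
      = (fun j => (ξ j : ℝ)) + Pi.single i (-1) := by
  funext j
  by_cases hj : j = i
  · subst hj
    simp only [Function.update_self, Pi.add_apply, Pi.single_eq_same]
    rw [Nat.cast_sub h]
    push_cast; ring
  · simp [Function.update_of_ne hj, Pi.single_eq_of_ne hj]

private lemma Q_up (ξ : Fin n → ℕ) (i : Fin n) :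
    Q G α β (Function.update ξ i (ξ i + 1)) - Q G α β ξ = U G α β ξ i + α / 2 := by
  unfold Q U
  rw [cast_update_add]
  have := Q_step G α β (fun j => (ξ j : ℝ)) i 1
  rw [this]; ring

private lemma Q_down (ξ : Fin n → ℕ) (i : Fin n) (h : 0 < ξ i) :
    Q G α β (Function.update ξ i (ξ i - 1)) - Q G α β ξ = -(U G α β ξ i) + α / 2 := by
  unfold Q U
  rw [cast_update_sub _ _ h]
  have := Q_step G α β (fun j => (ξ j : ℝ)) i (-1)
  rw [this]; ring

private lemma U_nonneg_of_zero (hβ : 0 ≤ β) (ξ : Fin n → ℕ) (i : Fin n) (h : ξ i = 0) :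
    0 ≤ U G α β ξ i := by
  unfold U
  rw [Matrix.add_mulVec, Matrix.smul_mulVec, Matrix.smul_mulVec, Matrix.one_mulVec]
  simp only [Pi.add_apply, Pi.smul_apply, smul_eq_mul, h, Nat.cast_zero, mul_zero, zero_add]
  refine mul_nonneg hβ ?_
  rw [SimpleGraph.adjMatrix_mulVec_apply]
  exact Finset.sum_nonneg fun j _ => Nat.cast_nonneg _

end Aux

/-- For `β ≥ 0` and nonzero `ξ ∈ ℤ₊ⁿ`, the (unnormalised) one-step drift of `Q` satisfies
`Σᵢ [e^{Uᵢ(ξ)}(Q(ξ+eᵢ)−Q(ξ)) + 1_{ξᵢ>0}(Q(ξ−eᵢ)−Q(ξ))] ≥ q_ξ (Ψ(U(ξ))/Φ(U(ξ)) + α/2)`,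
where `q_ξ = Σᵢ (e^{Uᵢ(ξ)} + 1_{ξᵢ>0})`, `Φ(u) = Σᵢ (e^{uᵢ}+1)`, `Ψ(u) = Σᵢ uᵢ(e^{uᵢ}−1)`. -/
theorem stmt12 {n : ℕ} (G : SimpleGraph (Fin n)) [DecidableRel G.Adj]
    (α β : ℝ) (hβ : 0 ≤ β) (ξ : Fin n → ℕ) (hξ : ξ ≠ 0) :
    (∑ i, (Real.exp (U G α β ξ i)
          * (Q G α β (Function.update ξ i (ξ i + 1)) - Q G α β ξ)
        + (if 0 < ξ i then (1 : ℝ) else 0)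
          * (Q G α β (Function.update ξ i (ξ i - 1)) - Q G α β ξ)))
      ≥ (∑ i, (Real.exp (U G α β ξ i) + if 0 < ξ i then (1 : ℝ) else 0))
        * ((∑ i, U G α β ξ i * (Real.exp (U G α β ξ i) - 1))
            / (∑ i, (Real.exp (U G α β ξ i) + 1))
          + α / 2) := by
  rcases Nat.eq_zero_or_pos n with hn | hn
  · subst hn
    simp
  set u : Fin n → ℝ := U G α β ξ with hu
  set ind : Fin n → ℝ := fun i => if 0 < ξ i then (1 : ℝ) else 0 with hind
  have hindmem : ∀ i, ind i = 0 ∨ ind i = 1 := by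
    intro i; by_cases h : 0 < ξ i <;> simp [hind, h]
  -- rewrite LHS
  have hLHS : (∑ i, (Real.exp (u i)
          * (Q G α β (Function.update ξ i (ξ i + 1)) - Q G α β ξ)
        + ind i * (Q G α β (Function.update ξ i (ξ i - 1)) - Q G α β ξ)))
      = (∑ i, u i * (Real.exp (u i) - ind i))
        + (∑ i, (Real.exp (u i) + ind i)) * (α / 2) := by
    rw [Finset.sum_mul, ← Finset.sum_add_distrib]
    refine Finset.sum_congr rfl fun i _ => ?_
    rw [Q_up G α β ξ i]
    by_cases h : 0 < ξ i
    · rw [Q_down G α β ξ i h]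
      simp only [hind, if_pos h]
      ring
    · simp only [hind, if_neg h]
      ring
  rw [hLHS]
  set P := ∑ i, u i * (Real.exp (u i) - ind i) with hP
  set Ψ := ∑ i, u i * (Real.exp (u i) - 1) with hΨ
  set Φ := ∑ i, (Real.exp (u i) + 1) with hΦ
  set q := ∑ i, (Real.exp (u i) + ind i) with hq
  have hΨ0 : 0 ≤ Ψ := by
    refine Finset.sum_nonneg fun i _ => ?_
    rcases le_or_gt 0 (u i) with h | h
    · exact mul_nonneg h (sub_nonneg.2 (Real.one_le_exp h))
    · have h1 : Real.exp (u i) - 1 ≤ 0 := sub_nonpos.2 (Real.exp_le_one_iff.2 h.le)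
      nlinarith [mul_nonneg (neg_nonneg.2 h.le) (neg_nonneg.2 h1)]
  have hPΨ : Ψ ≤ P := by
    refine Finset.sum_le_sum fun i _ => ?_
    by_cases h : 0 < ξ i
    · simp [hind, h]
    · have h0 : ξ i = 0 := Nat.eq_zero_of_not_pos h
      have hu0 : 0 ≤ u i := U_nonneg_of_zero G α β hβ ξ i h0
      simp only [hind, if_neg h, sub_zero]
      nlinarith
  have hΦpos : 0 < Φ := by
    refine Finset.sum_pos (fun i _ => by positivity) ?_
    exact ⟨⟨0, hn⟩, Finset.mem_univ _⟩
  have hqΦ : q ≤ Φ := by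
    refine Finset.sum_le_sum fun i _ => ?_
    rcases hindmem i with h | h <;> rw [h] <;> linarith
  have hq0 : 0 ≤ q := by
    refine Finset.sum_nonneg fun i _ => ?_
    rcases hindmem i with h | h <;> rw [h] <;> positivity
  have key : q * (Ψ / Φ) ≤ P := by
    have h1 : q * (Ψ / Φ) = Ψ * (q / Φ) := by ring
    have h2 : q / Φ ≤ 1 := (div_le_one hΦpos).2 hqΦ
    calc q * (Ψ / Φ) = Ψ * (q / Φ) := h1
      _ ≤ Ψ * 1 := mul_le_mul_of_nonneg_left h2 hΨ0
      _ = Ψ := mul_one _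
      _ ≤ P := hPΨ
  have : q * (Ψ / Φ + α / 2) = q * (Ψ / Φ) + q * (α / 2) := by ring
  rw [ge_iff_le, this]
  linarith
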